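/- Let b ≥ 2, d ≥ 1, n ≥ 1 be integers with d dividing n, let g = gcd(b, d), and let ω ∈ ℂ be a primitive d-th root of unity. Then in the polynomial ring ℂ[t] one has the identity (1 − t^d)^(n/d) · ∏_{i=0}^{n−1} (1 + ω^i t + (ω^i t)^2 + ⋯ + (ω^i t)^(b−1)) = (1 − t^(bd/g))^(g·n/d). -/

import Mathlib

open Polynomial Finset

lemma shift_periodic {M : Type*} (f : ℕ → M) (p : ℕ)
    (hf : ∀ i, f (i + p) = f i) : ∀ k j, f (k * p + j) = f j := by
  intro k
  induction k with
  | zero => simp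
  | succ k ih =>
    intro j
    have : (k + 1) * p + j = k * p + j + p := by ring
    rw [this, hf, ih]

/-- Product over `range (k*p)` of a `p`-periodic function. -/
lemma prod_range_mul_periodic {M : Type*} [CommMonoid M] (f : ℕ → M) (p k : ℕ)
    (hf : ∀ i, f (i + p) = f i) :
    ∏ i ∈ Finset.range (k * p), f i = (∏ i ∈ Finset.range p, f i) ^ k := by
  induction k with
  | zero => simp
  | succ k ih =>
    rw [Nat.succ_mul, Finset.prod_range_add, ih, pow_succ]
    congr 1
    exact Finset.prod_congr rfl fun j _ => shift_periodic f p hf k j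

/-- For a primitive `m`-th root of unity `ζ` in `ℂ`,
`∏_{i<m} (1 - ζ^i x) = 1 - x^m`. -/
lemma prod_one_sub_pow_mul {m : ℕ} (hm : 0 < m) {ζ : ℂ} (hζ : IsPrimitiveRoot ζ m) (x : ℂ) :
    ∏ i ∈ Finset.range m, (1 - ζ ^ i * x) = 1 - x ^ m := by
  have hinj : Set.InjOn (fun i => ζ ^ i) (Finset.range m) := fun i hi j hj h =>
    hζ.pow_inj (Finset.mem_range.mp hi) (Finset.mem_range.mp hj) h
  have hmem : ∀ i, ζ ^ i ∈ nthRootsFinset m (1 : ℂ) := by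
    intro i
    exact (mem_nthRootsFinset hm 1).mpr
      (by rw [← pow_mul, mul_comm, pow_mul, hζ.pow_eq_one, one_pow])
  have himage : (Finset.range m).image (fun i => ζ ^ i) = nthRootsFinset m (1 : ℂ) := by
    apply Finset.eq_of_subset_of_card_le
    · intro y hy
      obtain ⟨i, _, rfl⟩ := Finset.mem_image.mp hy
      exact hmem i
    · rw [hζ.card_nthRootsFinset, Finset.card_image_of_injOn hinj, Finset.card_range]
  have key : (1 : ℂ) ^ m - x ^ m = ∏ ρ ∈ nthRootsFinset m (1 : ℂ), (1 - ρ * x) :=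
    IsPrimitiveRoot.pow_sub_pow_eq_prod_sub_mul 1 x hm hζ
  rw [one_pow] at key
  rw [key, ← himage, Finset.prod_image hinj]

theorem stmt_0 (b d n : ℕ) (hb : 2 ≤ b) (hd : 1 ≤ d) (hn : 1 ≤ n) (hdn : d ∣ n)
    (g : ℕ) (hg : g = Nat.gcd b d) (ω : ℂ) (hω : IsPrimitiveRoot ω d) :
    (1 - X ^ d) ^ (n / d) *
      ∏ i ∈ Finset.range n, (∑ j ∈ Finset.range b, C ((ω ^ i) ^ j) * X ^ j) =
    (1 - X ^ (b * d / g)) ^ (g * (n / d)) := by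
  have hd0 : 0 < d := hd
  have hg0 : 0 < g := by rw [hg]; exact Nat.gcd_pos_of_pos_right _ hd0
  have hgd : g ∣ d := hg ▸ Nat.gcd_dvd_right b d
  set m := n / d with hm
  have hnd : n = m * d := by rw [hm, Nat.div_mul_cancel hdn]
  -- ω^b is a primitive (d/g)-th root of unity
  have hωb : IsPrimitiveRoot (ω ^ b) (d / g) := by
    have h1 : IsPrimitiveRoot (ω ^ b) (orderOf (ω ^ b)) := IsPrimitiveRoot.orderOf _
    have h2 : orderOf (ω ^ b) = d / g := by
      rw [orderOf_pow' ω (by omega : b ≠ 0), ← hω.eq_orderOf, hg, Nat.gcd_comm]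
    rwa [h2] at h1
  apply Polynomial.funext
  intro x
  simp only [eval_mul, eval_pow, eval_sub, eval_one, eval_prod, eval_finset_sum,
    eval_C, eval_X]
  have hper : ∀ i, (∑ j ∈ Finset.range b, (ω ^ (i + d)) ^ j * x ^ j)
      = ∑ j ∈ Finset.range b, (ω ^ i) ^ j * x ^ j := by
    intro i
    rw [pow_add, hω.pow_eq_one, mul_one]
  rw [hnd, prod_range_mul_periodic _ d m hper, ← mul_pow]
  have hdg : b * d / g = b * (d / g) := Nat.mul_div_assoc b hgd
  have key : (1 - x ^ d) * ∏ i ∈ Finset.range d, (∑ j ∈ Finset.range b, (ω ^ i) ^ j * x ^ j)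
      = (1 - (x ^ b) ^ (d / g)) ^ g := by
    rw [← prod_one_sub_pow_mul hd0 hω x, ← Finset.prod_mul_distrib]
    have step : ∀ i ∈ Finset.range d,
        (1 - ω ^ i * x) * (∑ j ∈ Finset.range b, (ω ^ i) ^ j * x ^ j)
        = 1 - ((ω ^ b) ^ i) * (x ^ b) := by
      intro i _
      have h1 := geom_sum_mul (ω ^ i * x) b
      have h2 : (1 - ω ^ i * x) * (∑ j ∈ Finset.range b, (ω ^ i * x) ^ j)
          = 1 - (ω ^ i * x) ^ b := by linear_combination -h1
      have h3 : ((ω ^ b) ^ i : ℂ) = (ω ^ i) ^ b := by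
        rw [← pow_mul, mul_comm, pow_mul]
      rw [h3, ← mul_pow, ← h2]
      congr 1
      exact Finset.sum_congr rfl fun j _ => (mul_pow _ _ _).symm
    rw [Finset.prod_congr rfl step]
    have hdgg : d = g * (d / g) := (Nat.mul_div_cancel' hgd).symm
    have hper2 : ∀ i, (1 - ((ω ^ b) ^ (i + d / g)) * (x ^ b))
        = 1 - ((ω ^ b) ^ i) * (x ^ b) := by
      intro i
      rw [pow_add, hωb.pow_eq_one, mul_one]
    conv_lhs => rw [hdgg, prod_range_mul_periodic _ (d / g) g hper2]
    congr 1
    have hdg0 : 0 < d / g := Nat.div_pos (Nat.le_of_dvd hd0 hgd) hg0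
    exact prod_one_sub_pow_mul hdg0 hωb (x ^ b)
  rw [key, hdg, ← pow_mul x b (d / g), ← pow_mul]
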